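/- Let A and B be n×n complex positive definite matrices and let p ∈ (0,1], with r := min{p, 1−p} and R := max{p, 1−p}. Then (2R/p)·(Tr[A # B] − Tr[A + B]/2) − Tr[T_p(A|B)] ≤ Tr[A − B] ≤ (2r/p)·(√(Tr[A]·Tr[B]) − Tr[A + B]/2) + D_p(A||B), where D_p(A||B) := (Tr[A] − Tr[A^{1−p} B^p])/p is the Tsallis relative entropy. -/

import Mathlib

open Matrix ComplexOrder

/-- Real power of a (Hermitian) complex matrix via the continuous functional calculus,
corresponding to `Matrix.PosDef.rpow` on positive definite matrices. -/
noncomputable def mrpow {n : Type*} [Fintype n] [DecidableEq n]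
    (A : Matrix n n ℂ) (r : ℝ) : Matrix n n ℂ :=
  cfc (fun t : ℝ => t ^ r) A

/-- The Loewner order: `loe X Y` means `Y - X` is positive semidefinite. -/
def loe {n : Type*} [Fintype n] (X Y : Matrix n n ℂ) : Prop :=
  (Y - X).PosSemidef

/-- `A ♮ᵣ B = A^{1/2} (A^{-1/2} B A^{-1/2})^r A^{1/2}`; for `r ∈ [0,1]` this is the
weighted geometric mean `A #ᵣ B`. -/
noncomputable def natu {n : Type*} [Fintype n] [DecidableEq n]
    (A B : Matrix n n ℂ) (r : ℝ) : Matrix n n ℂ :=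
  mrpow A (1 / 2) * mrpow (mrpow A (-(1 / 2)) * B * mrpow A (-(1 / 2))) r * mrpow A (1 / 2)

/-- The Tsallis relative operator entropy `T_p(A|B) = (A #_p B - A) / p`. -/
noncomputable def TsallisEntropy {n : Type*} [Fintype n] [DecidableEq n]
    (A B : Matrix n n ℂ) (p : ℝ) : Matrix n n ℂ :=
  (1 / p : ℝ) • (natu A B p - A)

section scalar

private lemma young_ref' {x y p : ℝ} (hx : 0 ≤ x) (hy : 0 ≤ y) (hp0 : 0 < p) (hp1 : p ≤ 1) :
    x ^ (2 - 2*p) * y ^ (2*p) ≤ (1-p)*x^2 + p*y^2 - min p (1-p) * (x-y)^2 := by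
  rcases le_or_gt p (1/2) with h | h
  · have hmin : min p (1-p) = p := min_eq_left (by linarith)
    have key := Real.geom_mean_le_arith_mean2_weighted (w₁ := 1-2*p) (w₂ := 2*p)
      (p₁ := x^2) (p₂ := x*y) (by linarith) (by linarith) (by positivity) (by positivity)
      (by ring)
    have e : ((x^2:ℝ)) ^ (1-2*p) * (x*y) ^ (2*p) = x ^ (2-2*p) * y ^ (2*p) := by
      rw [Real.mul_rpow hx hy, ← Real.rpow_natCast x 2, ← Real.rpow_mul hx,
        show (2:ℕ) * (1-2*p) = (2 - 4*p : ℝ) by push_cast; ring,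
        show (2 - 2*p : ℝ) = (2 - 4*p) + 2*p by ring,
        Real.rpow_add' hx (by intro hc; nlinarith)]
      ring
    rw [e] at key
    rw [hmin]; nlinarith [key]
  · have hmin : min p (1-p) = 1-p := min_eq_right (by linarith)
    have key := Real.geom_mean_le_arith_mean2_weighted (w₁ := 2*p-1) (w₂ := 2-2*p)
      (p₁ := y^2) (p₂ := x*y) (by linarith) (by linarith) (by positivity) (by positivity)
      (by ring)
    have e : ((y^2:ℝ)) ^ (2*p-1) * (x*y) ^ (2-2*p) = x ^ (2-2*p) * y ^ (2*p) := by
      rw [Real.mul_rpow hx hy, ← Real.rpow_natCast y 2, ← Real.rpow_mul hy,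
        show (2:ℕ) * (2*p-1) = (4*p - 2 : ℝ) by push_cast; ring]
      rw [show (2*p : ℝ) = (4*p-2) + (2-2*p) by ring,
        Real.rpow_add' hy (by intro hc; nlinarith)]
      ring
    rw [e] at key
    rw [hmin]; nlinarith [key]

private lemma young_rev' {x y p : ℝ} (hx : 0 ≤ x) (hy : 0 ≤ y) (hp0 : 0 < p) (hp1 : p ≤ 1) :
    (1-p)*x^2 + p*y^2 - max p (1-p) * (x-y)^2 ≤ x ^ (2 - 2*p) * y ^ (2*p) := by
  rcases le_or_gt p (1/2) with h | h
  · have hmax : max p (1-p) = 1-p := max_eq_right (by linarith)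
    have h2 : (0:ℝ) < 2-2*p := by linarith
    have h2' : (2-2*p : ℝ) ≠ 0 := ne_of_gt h2
    have hsum : 2*p*(1/(2-2*p)) + ((2:ℕ):ℝ)*((1-2*p)/(2-2*p)) = 1 := by
      push_cast
      rw [← mul_div_assoc, mul_one, ← mul_div_assoc, ← add_div, div_eq_one_iff_eq h2']; ring
    have key := Real.geom_mean_le_arith_mean2_weighted (w₁ := 1/(2-2*p)) (w₂ := (1-2*p)/(2-2*p))
      (p₁ := x ^ (2-2*p) * y ^ (2*p)) (p₂ := y^2)
      (by positivity) (by apply div_nonneg <;> linarith) (by positivity) (by positivity)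
      (by rw [← add_div, div_eq_one_iff_eq h2']; ring)
    have e : (x ^ (2-2*p) * y ^ (2*p)) ^ (1/(2-2*p)) * ((y^2:ℝ)) ^ ((1-2*p)/(2-2*p)) = x * y := by
      rw [Real.mul_rpow (by positivity) (by positivity),
        ← Real.rpow_natCast y 2, ← Real.rpow_mul hy, ← Real.rpow_mul hx, ← Real.rpow_mul hy,
        mul_assoc, ← Real.rpow_add' hy (ne_of_eq_of_ne hsum one_ne_zero), hsum,
        show (2-2*p)*(1/(2-2*p)) = (1:ℝ) by rw [mul_one_div, div_self h2'],
        Real.rpow_one, Real.rpow_one]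
    rw [e] at key
    have key2 := mul_le_mul_of_nonneg_left key (le_of_lt h2)
    rw [mul_add, ← mul_assoc, ← mul_assoc, mul_one_div, div_self h2',
      show (2-2*p) * ((1-2*p)/(2-2*p) * y^2) = (1-2*p)*y^2 by
        rw [← mul_assoc, mul_div_assoc', mul_comm (2-2*p) (1-2*p), mul_div_assoc, div_self h2', mul_one]] at key2
    rw [hmax]; nlinarith [key2]
  · have hmax : max p (1-p) = p := max_eq_left (by linarith)
    have h2 : (0:ℝ) < 2*p := by linarith
    have h2' : (2*p : ℝ) ≠ 0 := ne_of_gt h2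
    have hsum : (2-2*p)*(1/(2*p)) + ((2:ℕ):ℝ)*((2*p-1)/(2*p)) = 1 := by
      push_cast; field_simp; ring
    have key := Real.geom_mean_le_arith_mean2_weighted (w₁ := 1/(2*p)) (w₂ := (2*p-1)/(2*p))
      (p₁ := x ^ (2-2*p) * y ^ (2*p)) (p₂ := x^2)
      (by positivity) (by apply div_nonneg <;> linarith) (by positivity) (by positivity)
      (by rw [← add_div, div_eq_one_iff_eq h2']; ring)
    have e : (x ^ (2-2*p) * y ^ (2*p)) ^ (1/(2*p)) * ((x^2:ℝ)) ^ ((2*p-1)/(2*p)) = x * y := by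
      rw [Real.mul_rpow (by positivity) (by positivity),
        ← Real.rpow_natCast x 2, ← Real.rpow_mul hx, ← Real.rpow_mul hx, ← Real.rpow_mul hy,
        mul_right_comm, ← Real.rpow_add' hx (ne_of_eq_of_ne hsum one_ne_zero), hsum,
        show (2*p)*(1/(2*p)) = (1:ℝ) by field_simp,
        Real.rpow_one, Real.rpow_one]
    rw [e] at key
    have key2 := mul_le_mul_of_nonneg_left key (le_of_lt h2)
    rw [mul_add, ← mul_assoc, ← mul_assoc, mul_one_div, div_self h2',
      show (2*p) * ((2*p-1)/(2*p) * x^2) = (2*p-1)*x^2 by field_simp] at key2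
    rw [hmax]; nlinarith [key2]

end scalar

section matrixlemmas

variable {n : Type*} [Fintype n] [DecidableEq n]

private lemma contOn (f : ℝ → ℝ) (A : Matrix n n ℂ) : ContinuousOn f (spectrum ℝ A) := by
  rw [continuousOn_iff_continuous_restrict]
  have : Finite (spectrum ℝ A) := A.finite_real_spectrum
  exact continuous_of_discreteTopology

private lemma trace_eq_sum_eig {A : Matrix n n ℂ} (hA : A.IsHermitian) :
    A.trace = ∑ i, (hA.eigenvalues i : ℂ) := by
  conv_lhs => rw [hA.spectral_theorem]
  rw [Unitary.conjStarAlgAut_apply, Matrix.trace_mul_cycle, Unitary.coe_star_mul_self,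
    one_mul, Matrix.trace_diagonal]
  rfl

private lemma cfc_trace_eq {A : Matrix n n ℂ} (hA : A.IsHermitian) (f : ℝ → ℝ) :
    (cfc f A).trace = ∑ i, (f (hA.eigenvalues i) : ℂ) := by
  rw [hA.cfc_eq f, Matrix.IsHermitian.cfc, Unitary.conjStarAlgAut_apply,
    Matrix.trace_mul_cycle, Unitary.coe_star_mul_self,
    one_mul, Matrix.trace_diagonal]
  rfl

private lemma cfc_posSemidef {A : Matrix n n ℂ} (hA : A.IsHermitian) (f : ℝ → ℝ)
    (hf : ∀ i, 0 ≤ f (hA.eigenvalues i)) : (cfc f A).PosSemidef := by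
  rw [hA.cfc_eq f, Matrix.IsHermitian.cfc, Unitary.conjStarAlgAut_apply,
    Matrix.star_eq_conjTranspose]
  apply Matrix.PosSemidef.mul_mul_conjTranspose_same
  refine Matrix.posSemidef_diagonal_iff.mpr fun i => ?_
  simpa using Complex.zero_le_real.mpr (hf i)

private lemma spec_pos {A : Matrix n n ℂ} (hA : A.PosDef) :
    ∀ t ∈ spectrum ℝ A, 0 < t := by
  intro t ht
  rw [hA.isHermitian.spectrum_real_eq_range_eigenvalues] at ht
  obtain ⟨i, rfl⟩ := ht
  exact hA.eigenvalues_pos i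

private lemma trace_re_nonneg {M : Matrix n n ℂ} (hM : M.PosSemidef) : 0 ≤ M.trace.re := by
  rw [Matrix.trace, Complex.re_sum]
  apply Finset.sum_nonneg
  intro i _
  have h := hM.dotProduct_mulVec_nonneg (Pi.single i 1)
  have e : star (Pi.single i 1) ⬝ᵥ M *ᵥ Pi.single i 1 = M.diag i := by
    simp [Matrix.mulVec_single, dotProduct, Pi.single_apply, apply_ite]
  rw [e] at h
  exact (Complex.le_def.mp h).1

private lemma mrpow_sa (A : Matrix n n ℂ) (r : ℝ) : (mrpow A r).IsHermitian := by
  have h : IsSelfAdjoint (cfc (fun t : ℝ => t ^ r) A) := cfc_predicate _ A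
  rw [Matrix.IsHermitian, ← Matrix.star_eq_conjTranspose]
  exact h

private lemma mrpow_mul_mrpow {A : Matrix n n ℂ} (hA : A.PosDef) (r s : ℝ) :
    mrpow A r * mrpow A s = mrpow A (r + s) := by
  unfold mrpow
  rw [← cfc_mul _ _ A (contOn _ A) (contOn _ A)]
  exact cfc_congr fun t ht => (Real.rpow_add (spec_pos hA t ht) r s).symm

private lemma mrpow_one {A : Matrix n n ℂ} (hA : A.PosDef) : mrpow A 1 = A := by
  unfold mrpow
  rw [cfc_congr (g := id) fun t _ => Real.rpow_one t]
  exact cfc_id ℝ A (hA.1.isSelfAdjoint)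

private lemma mrpow_zero {A : Matrix n n ℂ} (hA : A.PosDef) : mrpow A 0 = 1 := by
  unfold mrpow
  rw [cfc_congr (g := fun _ => (1:ℝ)) fun t _ => Real.rpow_zero t]
  exact cfc_const_one ℝ A (hA.1.isSelfAdjoint)

end matrixlemmas

section holder

variable {n : Type*} [Fintype n] [DecidableEq n]

/-- Trace Hölder via eigendecompositions. -/
private lemma trace_mul_le_holder {A B : Matrix n n ℂ} (hA : A.PosDef) (hB : B.PosDef)
    {p : ℝ} (hp0 : 0 < p) (hp1 : p ≤ 1) :
    (mrpow A (1-p) * mrpow B p).trace.re ≤ (A.trace.re) ^ (1-p) * (B.trace.re) ^ p := by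
  rcases isEmpty_or_nonempty n with hn | hn
  · have hz : ∀ M : Matrix n n ℂ, M.trace = 0 := fun M => by simp [Matrix.trace]
    rw [hz, hz, hz]
    simp [Real.zero_rpow (ne_of_gt hp0)]
  set U : Matrix n n ℂ := (Matrix.IsHermitian.eigenvectorUnitary hA.1 : Matrix n n ℂ) with hU
  set V : Matrix n n ℂ := (Matrix.IsHermitian.eigenvectorUnitary hB.1 : Matrix n n ℂ) with hV
  set lam := hA.1.eigenvalues with hlam
  set mu := hB.1.eigenvalues with hmu
  set W : Matrix n n ℂ := star U * V with hW
  set c : n → n → ℝ := fun i j => Complex.normSq (W i j) with hc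
  set DA : Matrix n n ℂ := diagonal (RCLike.ofReal ∘ (fun t => t ^ (1-p)) ∘ lam) with hDA
  set DB : Matrix n n ℂ := diagonal (RCLike.ofReal ∘ (fun t => t ^ p) ∘ mu) with hDB
  have hUU : U * star U = 1 := (Matrix.mem_unitaryGroup_iff).mp (Matrix.IsHermitian.eigenvectorUnitary hA.1).2
  have hUU' : star U * U = 1 := (Matrix.mem_unitaryGroup_iff').mp (Matrix.IsHermitian.eigenvectorUnitary hA.1).2
  have hVV : V * star V = 1 := (Matrix.mem_unitaryGroup_iff).mp (Matrix.IsHermitian.eigenvectorUnitary hB.1).2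
  have h1 : mrpow A (1-p) = U * DA * star U := by rw [mrpow, hA.1.cfc_eq]; rfl
  have h2 : mrpow B p = V * DB * star V := by rw [mrpow, hB.1.cfc_eq]; rfl
  have hVV' : star V * V = 1 := (Matrix.mem_unitaryGroup_iff').mp (Matrix.IsHermitian.eigenvectorUnitary hB.1).2
  have hWW : W * star W = 1 := by
    rw [hW, Matrix.star_mul, star_star, mul_assoc (star U) V (star V * U),
      ← mul_assoc V (star V) U, hVV, one_mul, hUU']
  have hW'W : star W * W = 1 := by
    rw [hW, Matrix.star_mul, star_star, mul_assoc (star V) U (star U * V),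
      ← mul_assoc U (star U) V, hUU, one_mul, hVV']
  have hmat : U * DA * star U * (V * DB * star V) = U * (DA * W * DB * star W * star U) := by
    rw [hW, Matrix.star_mul, star_star]
    simp only [← mul_assoc]
    rw [mul_assoc _ U (star U), hUU, mul_one]
  have htr : (mrpow A (1-p) * mrpow B p).trace = (DA * W * DB * star W).trace := by
    rw [h1, h2, hmat, Matrix.trace_mul_comm, mul_assoc, hUU', mul_one]
  -- entrywise trace
  have hentry : ∀ i j, (DA * W * DB) i j
      = ((lam i ^ (1-p) : ℝ) : ℂ) * W i j * ((mu j ^ p : ℝ) : ℂ) := by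
    intro i j
    rw [hDA, hDB, Matrix.mul_diagonal, Matrix.diagonal_mul]
    rfl
  have hent : (DA * W * DB * star W).trace
      = ∑ i, ∑ j, (((lam i ^ (1-p) : ℝ) : ℂ) * W i j * ((mu j ^ p : ℝ) : ℂ)) * star (W i j) := by
    rw [Matrix.trace]
    apply Finset.sum_congr rfl; intro i _
    rw [Matrix.diag_apply, Matrix.mul_apply]
    apply Finset.sum_congr rfl; intro j _
    rw [hentry i j, Matrix.star_apply]
  have hre : (mrpow A (1-p) * mrpow B p).trace.re
      = ∑ i, ∑ j, (lam i ^ (1-p)) * (mu j ^ p) * c i j := by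
    rw [htr, hent, Complex.re_sum]
    apply Finset.sum_congr rfl; intro i _
    rw [Complex.re_sum]
    apply Finset.sum_congr rfl; intro j _
    rw [show (((lam i ^ (1-p) : ℝ) : ℂ) * W i j * ((mu j ^ p : ℝ) : ℂ)) * star (W i j)
        = ((lam i ^ (1-p) : ℝ) : ℂ) * ((mu j ^ p : ℝ) : ℂ) * (W i j * star (W i j)) by ring]
    rw [RCLike.star_def, Complex.mul_conj, ← Complex.ofReal_mul, ← Complex.ofReal_mul,
      Complex.ofReal_re]
  have hrow : ∀ i, ∑ j, c i j = 1 := by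
    intro i
    have h' : (W * star W) i i = (1 : Matrix n n ℂ) i i := by rw [hWW]
    rw [Matrix.mul_apply] at h'
    have e : ∀ j, W i j * (star W) j i = ((c i j : ℝ) : ℂ) := fun j => by
      rw [Matrix.star_apply, RCLike.star_def, Complex.mul_conj, hc]
    rw [Finset.sum_congr rfl fun j _ => e j] at h'
    have := congrArg Complex.re h'
    rw [Complex.re_sum] at this
    simpa using this
  have hcol : ∀ j, ∑ i, c i j = 1 := by
    intro j
    have h' : (star W * W) j j = (1 : Matrix n n ℂ) j j := by rw [hW'W]
    rw [Matrix.mul_apply] at h'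
    have e : ∀ i, (star W) j i * W i j = ((c i j : ℝ) : ℂ) := fun i => by
      rw [Matrix.star_apply, RCLike.star_def, mul_comm, Complex.mul_conj, hc]
    rw [Finset.sum_congr rfl fun i _ => e i] at h'
    have := congrArg Complex.re h'
    rw [Complex.re_sum] at this
    simpa using this
  have ha : A.trace.re = ∑ i, lam i := by
    rw [trace_eq_sum_eig hA.1, Complex.re_sum]; simp [hlam]
  have hb : B.trace.re = ∑ j, mu j := by
    rw [trace_eq_sum_eig hB.1, Complex.re_sum]; simp [hmu]
  set a := A.trace.re
  set b := B.trace.re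
  have ha_pos : 0 < a := by
    rw [ha]; exact Finset.sum_pos (fun i _ => hA.eigenvalues_pos i) Finset.univ_nonempty
  have hb_pos : 0 < b := by
    rw [hb]; exact Finset.sum_pos (fun i _ => hB.eigenvalues_pos i) Finset.univ_nonempty
  rw [hre]
  set K : ℝ := a ^ (1-p) * b ^ p with hK
  have hK_pos : 0 < K := mul_pos (Real.rpow_pos_of_pos ha_pos _) (Real.rpow_pos_of_pos hb_pos _)
  have point : ∀ i j, (lam i ^ (1-p)) * (mu j ^ p) * c i j
      ≤ (K * ((1-p) * (lam i / a) + p * (mu j / b))) * c i j := by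
    intro i j
    apply mul_le_mul_of_nonneg_right _ (Complex.normSq_nonneg _)
    have hg := Real.geom_mean_le_arith_mean2_weighted (w₁ := 1-p) (w₂ := p)
      (p₁ := lam i / a) (p₂ := mu j / b) (by linarith) (le_of_lt hp0)
      (div_nonneg (hA.eigenvalues_pos i).le ha_pos.le)
      (div_nonneg (hB.eigenvalues_pos j).le hb_pos.le) (by ring)
    have he : K * ((lam i / a) ^ (1-p) * (mu j / b) ^ p) = (lam i ^ (1-p)) * (mu j ^ p) := by
      rw [Real.div_rpow (hA.eigenvalues_pos i).le ha_pos.le,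
        Real.div_rpow (hB.eigenvalues_pos j).le hb_pos.le, hK]
      have h1 : (a:ℝ) ^ (1-p) ≠ 0 := ne_of_gt (Real.rpow_pos_of_pos ha_pos _)
      have h2 : (b:ℝ) ^ p ≠ 0 := ne_of_gt (Real.rpow_pos_of_pos hb_pos _)
      field_simp
      rfl
    calc (lam i ^ (1-p)) * (mu j ^ p) = K * ((lam i / a) ^ (1-p) * (mu j / b) ^ p) := he.symm
      _ ≤ K * ((1-p) * (lam i / a) + p * (mu j / b)) :=
        mul_le_mul_of_nonneg_left hg (le_of_lt hK_pos)
  calc ∑ i, ∑ j, (lam i ^ (1-p)) * (mu j ^ p) * c i j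
      ≤ ∑ i, ∑ j, (K * ((1-p) * (lam i / a) + p * (mu j / b))) * c i j :=
        Finset.sum_le_sum fun i _ => Finset.sum_le_sum fun j _ => point i j
    _ = K := by
        have expand : ∀ i j, (K * ((1-p) * (lam i / a) + p * (mu j / b))) * c i j
            = (K * (1-p) / a) * (lam i * c i j) + (K * p / b) * (mu j * c i j) := by
          intro i j; ring
        simp only [expand, Finset.sum_add_distrib, ← Finset.mul_sum]
        have e1 : ∑ i, lam i * ∑ j, c i j = a := by
          rw [ha]; apply Finset.sum_congr rfl; intro i _; rw [hrow i, mul_one]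
        have e2 : ∑ i, ∑ j, mu j * c i j = b := by
          rw [Finset.sum_comm, hb]; apply Finset.sum_congr rfl; intro j _
          rw [← Finset.mul_sum, hcol j, mul_one]
        rw [e2, e1]
        field_simp
        ring

end holder

section leftkey

variable {n : Type*} [Fintype n] [DecidableEq n]

private lemma left_key {A B : Matrix n n ℂ} (hA : A.PosDef) (hB : B.PosDef) {p : ℝ}
    (hp0 : 0 < p) (hp1 : p ≤ 1) :
    0 ≤ (natu A B p).trace.re + (max p (1-p) - (1-p)) * A.trace.re
      + (max p (1-p) - p) * B.trace.re - 2 * max p (1-p) * (natu A B (1/2)).trace.re := by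
  set R := max p (1-p) with hR
  set S : Matrix n n ℂ := mrpow A (1/2) with hS
  set T : Matrix n n ℂ := mrpow A (-(1/2)) with hT
  set C : Matrix n n ℂ := T * B * T with hC
  have hSh : S.IsHermitian := mrpow_sa A (1/2)
  have hTh : T.IsHermitian := mrpow_sa A (-(1/2))
  have hST : S * T = 1 := by
    rw [hS, hT, mrpow_mul_mrpow hA, show (1/2 + -(1/2) : ℝ) = 0 by ring, mrpow_zero hA]
  have hTS : T * S = 1 := by
    rw [hS, hT, mrpow_mul_mrpow hA, show (-(1/2) + 1/2 : ℝ) = 0 by ring, mrpow_zero hA]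
  have hSS : S * S = A := by
    rw [hS, mrpow_mul_mrpow hA, show (1/2 + 1/2 : ℝ) = 1 by norm_num, mrpow_one hA]
  have hCh : C.IsHermitian := by
    rw [hC, Matrix.IsHermitian]
    simp [Matrix.conjTranspose_mul, hTh.eq, hB.1.eq, mul_assoc]
  have hCpd : C.PosDef := by
    refine Matrix.PosDef.of_dotProduct_mulVec_pos hCh fun x hx => ?_
    have hTx : T *ᵥ x ≠ 0 := by
      intro hc
      apply hx
      have h2 := congrArg (fun v => S *ᵥ v) hc
      simpa [Matrix.mulVec_mulVec, hST] using h2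
    have key : star x ⬝ᵥ C *ᵥ x = star (T *ᵥ x) ⬝ᵥ B *ᵥ (T *ᵥ x) := by
      rw [Matrix.star_mulVec, hTh.eq, Matrix.dotProduct_mulVec (star x ᵥ* T) B (T *ᵥ x)]
      rw [hC]
      rw [← Matrix.mulVec_mulVec, ← Matrix.mulVec_mulVec]
      rw [Matrix.dotProduct_mulVec (star x) T (B *ᵥ (T *ᵥ x)),
        Matrix.dotProduct_mulVec (star x ᵥ* T) B (T *ᵥ x)]
    rw [key]
    exact hB.dotProduct_mulVec_pos hTx
  -- the scalar function
  set f : ℝ → ℝ := fun t => t ^ p + ((R - (1-p)) + ((R - p) * t - (2*R) * Real.sqrt t)) with hf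
  have hfnn : ∀ i, 0 ≤ f (hCh.eigenvalues i) := by
    intro i
    have ht : 0 < hCh.eigenvalues i := hCpd.eigenvalues_pos i
    set t := hCh.eigenvalues i
    have h1 := young_rev' (x := 1) (y := Real.sqrt t) zero_le_one (Real.sqrt_nonneg t) hp0 hp1
    have e1 : (1:ℝ) ^ (2-2*p) = 1 := Real.one_rpow _
    have e2 : Real.sqrt t ^ (2*p) = t ^ p := by
      rw [Real.sqrt_eq_rpow, ← Real.rpow_mul ht.le, show (1/2) * (2*p) = p by ring]
    have e3 : Real.sqrt t ^ 2 = t := Real.sq_sqrt ht.le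
    have hw : (1 - Real.sqrt t)^2 = 1 - 2*Real.sqrt t + t := by
      rw [sub_sq, one_pow, mul_one, e3]
    rw [e1, one_mul, e2, ← hR, hw, one_pow, e3] at h1
    show 0 ≤ t ^ p + ((R - (1-p)) + ((R - p) * t - (2*R) * Real.sqrt t))
    nlinarith [h1]
  have hpsd : (cfc f C).PosSemidef := cfc_posSemidef hCh f hfnn
  have hXpsd : (S * cfc f C * S).PosSemidef := by
    have h2 := hpsd.mul_mul_conjTranspose_same S
    rwa [hSh.eq] at h2
  have h0 := trace_re_nonneg hXpsd
  -- split cfc f C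
  have hsplit : cfc f C = mrpow C p + ((R - (1-p)) • (1 : Matrix n n ℂ)
      + ((R - p) • C - (2*R) • mrpow C (1/2))) := by
    rw [hf]
    rw [cfc_add C (fun t => t ^ p) _ (contOn _ C) (contOn _ C),
      cfc_add C (fun _ => R - (1-p)) _ (contOn _ C) (contOn _ C),
      cfc_sub (fun t => (R - p) * t) (fun t => (2*R) * Real.sqrt t) C (contOn _ C) (contOn _ C),
      cfc_const (R - (1-p)) C hCh.isSelfAdjoint,
      cfc_const_mul (R - p) (fun t => t) C (contOn _ C),
      cfc_const_mul (2*R) Real.sqrt C (contOn _ C),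
      cfc_id' ℝ C hCh.isSelfAdjoint,
      cfc_congr (g := fun t : ℝ => t ^ (1/2 : ℝ)) fun t _ => Real.sqrt_eq_rpow t,
      Algebra.algebraMap_eq_smul_one]
    rfl
  have hSCS : S * C * S = B := by
    rw [hC]
    simp only [← mul_assoc]
    rw [hST, one_mul, mul_assoc, hTS, mul_one]
  have hexp : S * cfc f C * S = natu A B p + ((R - (1-p)) • A
      + ((R - p) • B - (2*R) • natu A B (1/2))) := by
    rw [hsplit]
    simp only [mul_add, add_mul, mul_sub, sub_mul, Matrix.mul_smul, Matrix.smul_mul, mul_one]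
    rw [hSS, hSCS]
    rfl
  rw [hexp] at h0
  simp only [Matrix.trace_add, Matrix.trace_sub, Matrix.trace_smul, Complex.add_re,
    Complex.sub_re, Complex.real_smul, Complex.mul_re, Complex.ofReal_re, Complex.ofReal_im,
    zero_mul, sub_zero] at h0
  linarith [h0]

end leftkey

theorem stmt17 {n : Type*} [Fintype n] [DecidableEq n] {A B : Matrix n n ℂ}
    (hA : A.PosDef) (hB : B.PosDef) {p : ℝ} (hp0 : 0 < p) (hp1 : p ≤ 1) :
    (2 * max p (1 - p) / p) *
        (((natu A B (1 / 2)).trace).re - ((A + B).trace).re / 2)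
      - ((TsallisEntropy A B p).trace).re
      ≤ ((A - B).trace).re ∧
    ((A - B).trace).re
      ≤ (2 * min p (1 - p) / p) *
          (Real.sqrt ((A.trace).re * (B.trace).re) - ((A + B).trace).re / 2)
        + ((A.trace).re - ((mrpow A (1 - p) * mrpow B p).trace).re) / p := by
  have ha0 : 0 ≤ A.trace.re := trace_re_nonneg hA.posSemidef
  have hb0 : 0 ≤ B.trace.re := trace_re_nonneg hB.posSemidef
  set a := A.trace.re with hadef
  set b := B.trace.re with hbdef
  have hAB : (A + B).trace.re = a + b := by rw [Matrix.trace_add, Complex.add_re]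
  have hAmB : (A - B).trace.re = a - b := by rw [Matrix.trace_sub, Complex.sub_re]
  constructor
  · have key := left_key hA hB hp0 hp1
    set R := max p (1-p) with hR
    set tp := (natu A B p).trace.re
    set g := (natu A B (1/2)).trace.re
    have hts : (TsallisEntropy A B p).trace.re = (tp - a) / p := by
      rw [TsallisEntropy, Matrix.trace_smul, Matrix.trace_sub, Complex.real_smul,
        Complex.mul_re, Complex.ofReal_re, Complex.ofReal_im, zero_mul, Complex.sub_re]
      ring
    rw [hts, hAB, hAmB]
    rw [show 2*R/p * (g - (a+b)/2) - (tp - a)/p = (2*R*(g - (a+b)/2) - (tp - a))/p by ring,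
      div_le_iff₀ hp0]
    nlinarith [key]
  · have key := trace_mul_le_holder hA hB hp0 hp1
    set r := min p (1-p) with hr
    set tb := (mrpow A (1-p) * mrpow B p).trace.re
    rw [← hadef, ← hbdef] at key
    have young := young_ref' (x := Real.sqrt a) (y := Real.sqrt b)
      (Real.sqrt_nonneg a) (Real.sqrt_nonneg b) hp0 hp1
    have hw : (Real.sqrt a - Real.sqrt b)^2 = a - 2*(Real.sqrt a * Real.sqrt b) + b := by
      rw [sub_sq, Real.sq_sqrt ha0, Real.sq_sqrt hb0]; ring
    have ea : Real.sqrt a ^ (2-2*p) = a ^ (1-p) := by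
      rw [Real.sqrt_eq_rpow, ← Real.rpow_mul ha0, show (1/2) * (2-2*p) = 1-p by ring]
    have eb : Real.sqrt b ^ (2*p) = b ^ p := by
      rw [Real.sqrt_eq_rpow, ← Real.rpow_mul hb0, show (1/2) * (2*p) = p by ring]
    rw [ea, eb, ← hr, hw, Real.sq_sqrt ha0, Real.sq_sqrt hb0] at young
    rw [hAB, hAmB, Real.sqrt_mul ha0]
    rw [show 2*r/p * (Real.sqrt a * Real.sqrt b - (a+b)/2) + (a - tb)/p
        = (2*r*(Real.sqrt a * Real.sqrt b - (a+b)/2) + (a - tb))/p by ring,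
      le_div_iff₀ hp0]
    nlinarith [key, young]
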